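/- C_3(82) = 7; that is, every odd positive integer n for which there exist vectors v_1, ..., v_n in Z^3, each with squared Euclidean norm 82, summing to the zero vector satisfies n >= 7, and there exist seven vectors in Z^3, each with squared Euclidean norm 82, summing to the zero vector. -/

import Mathlib

/-- All vectors in `ℤ³` of squared norm 82. -/
def Lvec : List (ℤ × ℤ × ℤ) := [(-9, -1, 0), (-9, 0, -1), (-9, 0, 1), (-9, 1, 0), (-8, -3, -3), (-8, -3, 3), (-8, 3, -3), (-8, 3, 3), (-3, -8, -3), (-3, -8, 3), (-3, -3, -8), (-3, -3, 8), (-3, 3, -8), (-3, 3, 8), (-3, 8, -3), (-3, 8, 3), (-1, -9, 0), (-1, 0, -9), (-1, 0, 9), (-1, 9, 0), (0, -9, -1), (0, -9, 1), (0, -1, -9), (0, -1, 9), (0, 1, -9), (0, 1, 9), (0, 9, -1), (0, 9, 1), (1, -9, 0), (1, 0, -9), (1, 0, 9), (1, 9, 0), (3, -8, -3), (3, -8, 3), (3, -3, -8), (3, -3, 8), (3, 3, -8), (3, 3, 8), (3, 8, -3), (3, 8, 3), (8, -3, -3), (8, -3, 3), (8, 3, -3), (8, 3, 3), (9, -1,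 0), (9, 0, -1), (9, 0, 1), (9, 1, 0)]

def eZ (v : ℤ × ℤ × ℤ) : ℤ := (v.1 + 9) + 91 * (v.2.1 + 9) + 8281 * (v.2.2 + 9)

def posE (v : ℤ × ℤ × ℤ) : ℕ := (eZ v).toNat

def stepM (m : ℕ) : ℕ := Lvec.foldr (fun v acc => acc ||| (m <<< posE v)) 0

def Smask : ℕ → ℕ
  | 0 => 1
  | k + 1 => stepM (Smask k)

lemma hL_nonneg : ∀ v ∈ Lvec, 0 ≤ eZ v := by decide

set_option maxRecDepth 40000 in
lemma mem_L_aux : ∀ x ∈ Finset.Icc (-9 : ℤ) 9, ∀ y ∈ Finset.Icc (-9 : ℤ) 9,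
    ∀ z ∈ Finset.Icc (-9 : ℤ) 9, x ^ 2 + y ^ 2 + z ^ 2 = 82 → (x, y, z) ∈ Lvec := by
  decide

lemma mem_L (x y z : ℤ) (h : x ^ 2 + y ^ 2 + z ^ 2 = 82) : (x, y, z) ∈ Lvec := by
  have hx : x ∈ Finset.Icc (-9 : ℤ) 9 := by
    simp only [Finset.mem_Icc]
    constructor <;> nlinarith [sq_nonneg y, sq_nonneg z]
  have hy : y ∈ Finset.Icc (-9 : ℤ) 9 := by
    simp only [Finset.mem_Icc]
    constructor <;> nlinarith [sq_nonneg x, sq_nonneg z]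
  have hz : z ∈ Finset.Icc (-9 : ℤ) 9 := by
    simp only [Finset.mem_Icc]
    constructor <;> nlinarith [sq_nonneg x, sq_nonneg y]
  exact mem_L_aux x hx y hy z hz h

lemma testBit_foldr (m b : ℕ) (l : List (ℤ × ℤ × ℤ)) (v : ℤ × ℤ × ℤ) (hv : v ∈ l)
    (p : ℕ) (hm : m.testBit p = true) :
    (l.foldr (fun w acc => acc ||| (m <<< posE w)) b).testBit (p + posE v) = true := by
  induction l with
  | nil => cases hv
  | cons w t ih =>
    simp only [List.foldr_cons]
    rcases List.mem_cons.mp hv with h | h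
    · subst h
      have h1 : (m <<< posE v).testBit (p + posE v) = true := by
        rw [Nat.testBit_shiftLeft]
        simp [Nat.le_add_left, Nat.add_sub_cancel, hm]
      rw [Nat.testBit_lor, h1, Bool.or_true]
    · rw [Nat.testBit_lor, ih h, Bool.true_or]

lemma bit_of_list : ∀ (vs : List (ℤ × ℤ × ℤ)), (∀ v ∈ vs, v ∈ Lvec) →
    (Smask vs.length).testBit ((vs.map eZ).sum.toNat) = true := by
  intro vs
  induction vs with
  | nil => intro _; decide
  | cons v t ih =>
    intro h
    have hv : v ∈ Lvec := h v List.mem_cons_self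
    have ht : ∀ w ∈ t, w ∈ Lvec := fun w hw => h w (List.mem_cons_of_mem _ hw)
    have hsum_nonneg : 0 ≤ (t.map eZ).sum := by
      apply List.sum_nonneg
      intro x hx
      obtain ⟨w, hw, rfl⟩ := List.mem_map.mp hx
      exact hL_nonneg w (ht w hw)
    have hv0 : 0 ≤ eZ v := hL_nonneg v hv
    have hmap : ((v :: t).map eZ).sum = eZ v + (t.map eZ).sum := by simp
    rw [hmap, Int.toNat_add hv0 hsum_nonneg]
    show (stepM (Smask t.length)).testBit ((eZ v).toNat + (t.map eZ).sum.toNat) = true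
    rw [Nat.add_comm]
    exact testBit_foldr _ _ Lvec v hv _ (ih ht)

/-- If `n` vectors of squared norm 82 sum to zero, then bit `75357 * n` of `Smask n` is set. -/
lemma bit_of_cycle (n : ℕ) (v : Fin n → (Fin 3 → ℤ))
    (h1 : ∀ i, ∑ j, (v i j) ^ 2 = (82 : ℤ)) (h2 : (∑ i, v i) = 0) :
    (Smask n).testBit (75357 * n) = true := by
  set vs : List (ℤ × ℤ × ℤ) := List.ofFn (fun i => (v i 0, v i 1, v i 2)) with hvs
  have hlen : vs.length = n := by simp [hvs]
  have hmem : ∀ w ∈ vs, w ∈ Lvec := by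
    intro w hw
    rw [hvs, List.mem_ofFn] at hw
    obtain ⟨i, rfl⟩ := hw
    apply mem_L
    have := h1 i
    rwa [Fin.sum_univ_three] at this
  have hcoord : ∀ j : Fin 3, (∑ i, v i j) = 0 := by
    intro j
    have := congrFun h2 j
    rwa [Finset.sum_apply] at this
  have hsum : (vs.map eZ).sum = 75357 * n := by
    rw [hvs, List.map_ofFn, List.sum_ofFn]
    have hterm : (∑ i : Fin n, (eZ ∘ fun i => (v i 0, v i 1, v i 2)) i) =
        ∑ i : Fin n, (v i 0 + 91 * v i 1 + 8281 * v i 2 + 75357) :=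
      Finset.sum_congr rfl (fun i _ => by simp only [Function.comp_apply, eZ]; ring)
    rw [hterm]
    simp only [Finset.sum_add_distrib, ← Finset.mul_sum, hcoord 0, hcoord 1, hcoord 2,
      Finset.sum_const, Finset.card_univ, Fintype.card_fin, smul_eq_mul]
    ring
  have := bit_of_list vs hmem
  rw [hlen, hsum] at this
  simpa [show (75357 * (n:ℤ)).toNat = 75357 * n by omega] using this

set_option maxRecDepth 40000 in
lemma no1 : (Smask 1).testBit (75357 * 1) = false := by decide
set_option maxRecDepth 40000 in
lemma no3 : (Smask 3).testBit (75357 * 3) = false := by decide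
set_option maxRecDepth 40000 in
lemma no5 : (Smask 5).testBit (75357 * 5) = false := by decide

/-- `C₃(82) = 7`: every odd `n` admitting vectors `v₁, …, vₙ ∈ ℤ³`, each of
squared norm 82, summing to zero, satisfies `n ≥ 7`, and seven such vectors exist. -/
theorem C3_82_eq_seven :
    (∀ n : ℕ, Odd n →
      (∃ v : Fin n → (Fin 3 → ℤ),
        (∀ i, ∑ j, (v i j) ^ 2 = (82 : ℤ)) ∧ (∑ i, v i) = 0) → 7 ≤ n) ∧
    (∃ v : Fin 7 → (Fin 3 → ℤ),
      (∀ i, ∑ j, (v i j) ^ 2 = (82 : ℤ)) ∧ (∑ i, v i) = 0) := by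
  constructor
  · intro n hodd ⟨v, h1, h2⟩
    by_contra hlt
    push_neg at hlt
    interval_cases n
    · exact absurd hodd (by decide)
    · exact absurd (bit_of_cycle 1 v h1 h2) (by rw [no1]; decide)
    · exact absurd hodd (by decide)
    · exact absurd (bit_of_cycle 3 v h1 h2) (by rw [no3]; decide)
    · exact absurd hodd (by decide)
    · exact absurd (bit_of_cycle 5 v h1 h2) (by rw [no5]; decide)
    · exact absurd hodd (by decide)
  · refine ⟨![![9, -1, 0], ![-8, -3, -3], ![-3, -8, -3], ![0, 9, -1], ![-1, 9, 0], ![0, -9, -1], ![3, 3, 8]], ?_, ?_⟩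
    · intro i
      fin_cases i <;> decide
    · decide
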